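/- Let H be a separable infinite-dimensional complex Hilbert space and let S ∈ B(H) satisfy [S, T] ∈ F(H) for every compact operator T ∈ K(H). Then S ∈ ℂ·I_H + F(H), i.e., there exist a scalar c ∈ ℂ and a finite-rank operator K ∈ F(H) with S = c·I_H + K. -/

import Mathlib

/-- A continuous linear operator has finite rank, i.e. finite-dimensional range. -/
def IsFiniteRank {H : Type*} [NormedAddCommGroup H] [InnerProductSpace ℂ H]
    (T : H →L[ℂ] H) : Prop :=
  FiniteDimensional ℂ (LinearMap.range (T : H →ₗ[ℂ] H))


open Submodule

local notation "⟪" x ", " y "⟫" => @inner ℂ _ _ x y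

section Aux
variable {H : Type*} [NormedAddCommGroup H] [InnerProductSpace ℂ H] [CompleteSpace H]

private lemma prop_lemma {V W : Type*} [AddCommGroup V] [Module ℂ V] [AddCommGroup W] [Module ℂ W]
    (f g : V →ₗ[ℂ] W) (h : ∀ v, ∃ a : ℂ, f v = a • g v) :
    (∃ c : ℂ, ∀ v, f v = c • g v) ∨ (∃ w : W, ∀ v, ∃ μ : ℂ, f v = μ • w) := by
  by_cases hg : ∃ w : W, ∀ v, ∃ μ : ℂ, g v = μ • w
  · right
    obtain ⟨w, hw⟩ := hg
    refine ⟨w, fun v => ?_⟩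
    obtain ⟨a, ha⟩ := h v
    obtain ⟨μ, hμ⟩ := hw v
    exact ⟨a * μ, by rw [ha, hμ, smul_smul]⟩
  · left
    push_neg at hg
    obtain ⟨v₁, hv₁⟩ := hg 0
    have hgv₁ : g v₁ ≠ 0 := by simpa using hv₁ 0
    obtain ⟨v₂, hv₂⟩ := hg (g v₁)
    have hind : ∀ a b : ℂ, a • g v₁ + b • g v₂ = 0 → a = 0 ∧ b = 0 := by
      intro a b hab
      by_cases hb : b = 0
      · subst hb
        rw [zero_smul, add_zero] at hab
        rcases smul_eq_zero.mp hab with h' | h'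
        · exact ⟨h', rfl⟩
        · exact absurd h' hgv₁
      · exfalso
        apply hv₂ (b⁻¹ * (-a))
        have hba : b • g v₂ = (-a) • g v₁ := by
          rw [neg_smul, ← sub_eq_zero, sub_neg_eq_add, add_comm]; exact hab
        calc g v₂ = b⁻¹ • (b • g v₂) := by rw [smul_smul, inv_mul_cancel₀ hb, one_smul]
          _ = (b⁻¹ * (-a)) • g v₁ := by rw [hba, smul_smul]
    obtain ⟨l₁, hl₁⟩ := h v₁
    obtain ⟨l₂, hl₂⟩ := h v₂
    refine ⟨l₁, fun v => ?_⟩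
    -- first, a helper: for any u with (g u, g v₁) independent, the coefficient of u is l₁
    obtain ⟨lv, hlv⟩ := h v
    have key : ∀ l l' : ℂ, ∀ u₁ u₂ : V,
        (∀ a b : ℂ, a • g u₁ + b • g u₂ = 0 → a = 0 ∧ b = 0) →
        f u₁ = l • g u₁ → f u₂ = l' • g u₂ → l = l' := by
      intro l l' u₁ u₂ hi h1 h2
      obtain ⟨l'', h''⟩ := h (u₁ + u₂)
      rw [map_add, map_add, h1, h2, smul_add] at h''
      have : (l - l'') • g u₁ + (l' - l'') • g u₂ = 0 := by
        linear_combination (norm := module) h''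
      obtain ⟨ha, hb⟩ := hi _ _ this
      rw [sub_eq_zero] at ha hb
      rw [ha, hb]
    have hl21 : l₂ = l₁ := by
      have := key l₁ l₂ v₁ v₂ hind hl₁ hl₂
      exact this.symm
    by_cases hc : ∀ a b : ℂ, a • g v + b • g v₁ = 0 → a = 0 ∧ b = 0
    · rw [hlv, key lv l₁ v v₁ hc hlv hl₁]
    · push_neg at hc
      obtain ⟨a, b, hab, hab'⟩ := hc
      have ha : a ≠ 0 := by
        intro h0
        subst h0
        rw [zero_smul, zero_add] at hab
        rcases smul_eq_zero.mp hab with h' | h'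
        · exact hab' rfl h'
        · exact absurd h' hgv₁
      have hgv : g v = (a⁻¹ * (-b)) • g v₁ := by
        have : a • g v = (-b) • g v₁ := by
          rw [neg_smul, ← sub_eq_zero, sub_neg_eq_add]; exact hab
        calc g v = a⁻¹ • (a • g v) := by rw [smul_smul, inv_mul_cancel₀ ha, one_smul]
          _ = (a⁻¹ * (-b)) • g v₁ := by rw [this, smul_smul]
      set α := a⁻¹ * (-b) with hα
      by_cases hα0 : α = 0
      · rw [hlv, hgv, hα0, zero_smul, smul_zero, smul_zero]
      · -- use v + v₂
        obtain ⟨l', h'⟩ := h (v + v₂)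
        rw [map_add, map_add, hlv, hl₂, smul_add, hgv] at h'
        have hcomb : ((lv - l') * α) • g v₁ + (l₂ - l') • g v₂ = 0 := by
          simp only [smul_smul] at h'
          linear_combination (norm := module) h'
        obtain ⟨h1, h2⟩ := hind _ _ hcomb
        have : lv = l' := by
          rcases mul_eq_zero.mp h1 with h | h
          · rw [sub_eq_zero] at h; exact h
          · exact absurd h hα0
        rw [sub_eq_zero] at h2
        rw [hlv, this, ← h2, hl21]

private lemma fd_of_top_le {M B : Submodule ℂ H} [FiniteDimensional ℂ M]
    [FiniteDimensional ℂ B] (h : (⊤ : Submodule ℂ H) ≤ M ⊔ B) : FiniteDimensional ℂ H := by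
  have : FiniteDimensional ℂ (⊤ : Submodule ℂ H) :=
    Submodule.finiteDimensional_of_le h
  exact Module.Finite.equiv (Submodule.topEquiv (R := ℂ) (M := H))

lemma exists_good_pair {A : H →L[ℂ] H} (hinf : ¬ FiniteDimensional ℂ H)
    (hA : ∀ c : ℂ, ¬ IsFiniteRank (A - c • 1)) (n : ℕ) (xs zs : ℕ → H) :
    ∃ x z : H, ‖x‖ = 1 ∧ ⟪x, z⟫ = 1 ∧ ⟪x, A z⟫ = 0 ∧
      (∀ m, m < n → ⟪xs m, z⟫ = 0 ∧ ⟪xs m, A z⟫ = 0) ∧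
      (∀ j, j < n → ⟪x, zs j⟫ = 0 ∧ ⟪x, A (zs j)⟫ = 0) := by
  classical
  set M : Submodule ℂ H :=
    span ℂ (xs '' Set.Iio n ∪ (fun m => ContinuousLinearMap.adjoint A (xs m)) '' Set.Iio n) with hM
  set B0 : Submodule ℂ H := span ℂ (zs '' Set.Iio n ∪ (fun j => A (zs j)) '' Set.Iio n) with hB0
  haveI : FiniteDimensional ℂ M :=
    FiniteDimensional.span_of_finite ℂ
      (((Set.finite_Iio n).image _).union ((Set.finite_Iio n).image _))
  haveI : FiniteDimensional ℂ B0 :=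
    FiniteDimensional.span_of_finite ℂ
      (((Set.finite_Iio n).image _).union ((Set.finite_Iio n).image _))
  have hzMem : ∀ z, z ∈ Mᗮ → ∀ m, m < n → ⟪xs m, z⟫ = 0 ∧ ⟪xs m, A z⟫ = 0 := by
    intro z hz m hm
    constructor
    · have hmem : xs m ∈ M := Submodule.subset_span
        (Set.mem_union_left _ (Set.mem_image_of_mem xs (Set.mem_Iio.mpr hm)))
      exact Submodule.inner_right_of_mem_orthogonal hmem hz
    · rw [← ContinuousLinearMap.adjoint_inner_left]
      have hmem : ContinuousLinearMap.adjoint A (xs m) ∈ M := Submodule.subset_span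
        (Set.mem_union_right _
          (Set.mem_image_of_mem (fun m => ContinuousLinearMap.adjoint A (xs m))
            (Set.mem_Iio.mpr hm)))
      exact Submodule.inner_right_of_mem_orthogonal hmem hz
  have hxMem : ∀ x, x ∈ B0ᗮ → ∀ j, j < n → ⟪x, zs j⟫ = 0 ∧ ⟪x, A (zs j)⟫ = 0 := by
    intro x hx j hj
    have h1 : zs j ∈ B0 := Submodule.subset_span
      (Set.mem_union_left _ (Set.mem_image_of_mem zs (Set.mem_Iio.mpr hj)))
    have h2 : A (zs j) ∈ B0 := Submodule.subset_span
      (Set.mem_union_right _ (Set.mem_image_of_mem (fun j => A (zs j)) (Set.mem_Iio.mpr hj)))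
    exact ⟨Submodule.inner_left_of_mem_orthogonal h1 hx,
      Submodule.inner_left_of_mem_orthogonal h2 hx⟩
  by_contra hcon
  push_neg at hcon
  -- every z in Mᗮ lies in B0 + ℂ (A z)
  have HQ : ∀ z, z ∈ Mᗮ → ∃ w ∈ B0, ∃ lam : ℂ, z = w + lam • A z := by
    intro z hz
    by_contra hK
    push_neg at hK
    set N : Submodule ℂ H := B0 ⊔ (ℂ ∙ (A z)) with hN
    haveI : FiniteDimensional ℂ N := by
      have : FiniteDimensional ℂ (ℂ ∙ (A z)) :=
        FiniteDimensional.span_of_finite ℂ (Set.finite_singleton _)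
      infer_instance
    have hzN : z ∉ N := by
      intro hzN
      obtain ⟨w, hw, u, hu, huw⟩ := Submodule.mem_sup.mp hzN
      obtain ⟨s, rfl⟩ := Submodule.mem_span_singleton.mp hu
      exact hK w hw s huw.symm
    set x' : H := z - (orthogonalProjection N z : H) with hx'
    have hx'0 : x' ≠ 0 := by
      intro h0
      apply hzN
      rw [← starProjection_eq_self_iff (K := N)]
      rw [sub_eq_zero] at h0
      exact h0.symm
    have hx'N : x' ∈ Nᗮ := sub_starProjection_mem_orthogonal z
    have hinner : ⟪x', z⟫ = (‖x'‖ : ℂ) ^ 2 := by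
      have hz2 : z = x' + (orthogonalProjection N z : H) := by rw [hx']; abel
      calc ⟪x', z⟫ = ⟪x', x'⟫ + ⟪x', (orthogonalProjection N z : H)⟫ := by
            rw [← inner_add_right, ← hz2]
        _ = (‖x'‖ : ℂ) ^ 2 := by
            rw [Submodule.inner_left_of_mem_orthogonal (SetLike.coe_mem _) hx'N,
              inner_self_eq_norm_sq_to_K, add_zero]
            norm_cast
    set x : H := ((‖x'‖ : ℂ))⁻¹ • x' with hxdef
    have hxN : x ∈ Nᗮ := Submodule.smul_mem _ _ hx'N
    have hnx' : (‖x'‖ : ℂ) ≠ 0 := by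
      simpa using norm_ne_zero_iff.mpr hx'0
    have hxnorm : ‖x‖ = 1 := by
      rw [hxdef, norm_smul, norm_inv]
      simp only [Complex.norm_real, norm_norm]
      rw [inv_mul_cancel₀ (norm_ne_zero_iff.mpr hx'0)]
    have hxz : ⟪x, z⟫ = (‖x'‖ : ℂ) := by
      rw [hxdef, inner_smul_left, hinner]
      rw [map_inv₀, Complex.conj_ofReal]
      field_simp
    set z' : H := ((‖x'‖ : ℂ))⁻¹ • z with hz'def
    have hxz' : ⟪x, z'⟫ = 1 := by
      rw [hz'def, inner_smul_right, hxz, inv_mul_cancel₀ hnx']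
    have hxAz : ⟪x, A z⟫ = 0 :=
      Submodule.inner_left_of_mem_orthogonal
        (Submodule.mem_sup_right (Submodule.mem_span_singleton_self _)) hxN
    have hz'M : z' ∈ Mᗮ := Submodule.smul_mem _ _ hz
    have hxB0 : x ∈ B0ᗮ := Submodule.orthogonal_le le_sup_left hxN
    have hxAz' : ⟪x, A z'⟫ = 0 := by
      rw [hz'def, map_smul, inner_smul_right, hxAz, mul_zero]
    obtain ⟨j, hj, hbad⟩ := hcon x z' hxnorm hxz' hxAz' (hzMem z' hz'M)
    exact hbad (hxMem x hxB0 j hj).1 (hxMem x hxB0 j hj).2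
  -- the projection complement Q
  set P : H →L[ℂ] H := B0.subtypeL.comp (orthogonalProjection B0) with hPdef
  set Q : H →L[ℂ] H := ContinuousLinearMap.id ℂ H - P with hQdef
  have hQapply : ∀ v : H, Q v = v - (orthogonalProjection B0 v : H) := fun v => rfl
  have hQ0 : ∀ v ∈ B0, Q v = 0 := by
    intro v hv
    rw [hQapply, show ((orthogonalProjection B0 v : H)) = v from starProjection_eq_self_iff.mpr hv, sub_self]
  have hQker : ∀ v, Q v = 0 → v ∈ B0 := by
    intro v hv
    rw [hQapply, sub_eq_zero] at hv
    rw [hv]; exact SetLike.coe_mem _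
  have hQfix : ∀ v ∈ B0ᗮ, Q v = v := by
    intro v hv
    rw [hQapply, orthogonalProjection_mem_subspace_orthogonalComplement_eq_zero hv]
    simp
  -- set up linear maps on Mᗮ
  set f : (Mᗮ : Submodule ℂ H) →ₗ[ℂ] H := Q.toLinearMap.comp Mᗮ.subtype with hfdef
  set g : (Mᗮ : Submodule ℂ H) →ₗ[ℂ] H := (Q.comp A).toLinearMap.comp Mᗮ.subtype with hgdef
  have hfg : ∀ v, ∃ a : ℂ, f v = a • g v := by
    rintro ⟨z, hz⟩
    obtain ⟨w, hw, lam, hzw⟩ := HQ z hz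
    refine ⟨lam, ?_⟩
    have : Q z = Q w + lam • Q (A z) := by
      rw [← map_smul, ← map_add, ← hzw]
    simp only [hfdef, hgdef, LinearMap.comp_apply, Submodule.subtype_apply,
      ContinuousLinearMap.coe_coe, ContinuousLinearMap.comp_apply]
    rw [this, hQ0 w hw, zero_add]
  rcases prop_lemma f g hfg with ⟨c, hc⟩ | ⟨w, hw⟩
  · by_cases hc0 : c = 0
    · -- Mᗮ ≤ B0
      apply hinf
      have hle : Mᗮ ≤ B0 := by
        intro z hz
        have := hc ⟨z, hz⟩
        rw [hc0, zero_smul] at this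
        exact hQker z this
      refine fd_of_top_le (M := M) (B := B0) ?_
      rw [← Submodule.sup_orthogonal_of_hasOrthogonalProjection (K := M)]
      exact sup_le_sup_left hle _
    · -- finite rank of 1 - c A
      apply hA c⁻¹
      set D : H →L[ℂ] H := 1 - c • A with hDdef
      have hDz : ∀ z ∈ Mᗮ, D z ∈ B0 := by
        intro z hz
        apply hQker
        have := hc ⟨z, hz⟩
        simp only [hfdef, hgdef, LinearMap.comp_apply, Submodule.subtype_apply,
          ContinuousLinearMap.coe_coe, ContinuousLinearMap.comp_apply] at this
        have : Q (z - c • A z) = 0 := by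
          rw [map_sub, map_smul, this, sub_self]
        convert this using 2
        simp [hDdef]
      have hrange : LinearMap.range (D : H →ₗ[ℂ] H) ≤ M.map (D : H →ₗ[ℂ] H) ⊔ B0 := by
        rintro - ⟨v, rfl⟩
        have hv : v ∈ M ⊔ Mᗮ := by
          rw [Submodule.sup_orthogonal_of_hasOrthogonalProjection]; trivial
        obtain ⟨m, hm, z, hz, rfl⟩ := Submodule.mem_sup.mp hv
        have : (D : H →ₗ[ℂ] H) (m + z) = (D : H →ₗ[ℂ] H) m + (D : H →ₗ[ℂ] H) z := map_add _ _ _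
        rw [this]
        exact Submodule.add_mem_sup (Submodule.mem_map_of_mem hm) (hDz z hz)
      haveI : FiniteDimensional ℂ ↥(M.map (D : H →ₗ[ℂ] H) ⊔ B0) := by infer_instance
      have hfdD : FiniteDimensional ℂ (LinearMap.range (D : H →ₗ[ℂ] H)) :=
        Submodule.finiteDimensional_of_le hrange
      have heq : A - c⁻¹ • 1 = (-c⁻¹) • D := by
        rw [hDdef]
        rw [smul_sub, smul_smul, neg_mul, inv_mul_cancel₀ hc0]
        simp [neg_smul]
        abel
      rw [IsFiniteRank, heq]
      have hr2 : LinearMap.range (((-c⁻¹) • D : H →L[ℂ] H) : H →ₗ[ℂ] H)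
          ≤ LinearMap.range (D : H →ₗ[ℂ] H) := by
        rintro - ⟨v, rfl⟩
        exact ⟨(-c⁻¹) • v, by simp [map_smul]⟩
      exact Submodule.finiteDimensional_of_le hr2
  · -- rank f ≤ 1 : H is finite dimensional, contradiction
    apply hinf
    set R : Submodule ℂ H := M.map (Q : H →ₗ[ℂ] H) ⊔ (ℂ ∙ w) with hR
    haveI : FiniteDimensional ℂ R := by
      have : FiniteDimensional ℂ (ℂ ∙ w) :=
        FiniteDimensional.span_of_finite ℂ (Set.finite_singleton _)
      infer_instance
    have hle : B0ᗮ ≤ R := by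
      intro v hv
      have hvtop : v ∈ M ⊔ Mᗮ := by
        rw [Submodule.sup_orthogonal_of_hasOrthogonalProjection]; trivial
      obtain ⟨m, hm, z, hz, rfl⟩ := Submodule.mem_sup.mp hvtop
      obtain ⟨μ, hμ⟩ := hw ⟨z, hz⟩
      simp only [hfdef, LinearMap.comp_apply, Submodule.subtype_apply,
        ContinuousLinearMap.coe_coe] at hμ
      have : Q (m + z) = m + z := hQfix _ hv
      have h2 : m + z = Q m + μ • w := by
        rw [← this, map_add, hμ]
      rw [h2]
      exact Submodule.add_mem_sup (Submodule.mem_map_of_mem hm)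
        (Submodule.mem_span_singleton.mpr ⟨μ, rfl⟩)
    refine fd_of_top_le (M := B0) (B := R) ?_
    rw [← Submodule.sup_orthogonal_of_hasOrthogonalProjection (K := B0)]
    exact sup_le_sup_left hle _


private noncomputable def pick (A : H →L[ℂ] H) (hinf : ¬ FiniteDimensional ℂ H)
    (hA : ∀ c : ℂ, ¬ IsFiniteRank (A - c • 1)) : ℕ → H × H
  | n =>
    let xs : ℕ → H := fun k => if h : k < n then (pick A hinf hA k).1 else 0
    let zs : ℕ → H := fun k => if h : k < n then (pick A hinf hA k).2 else 0
    ⟨(exists_good_pair hinf hA n xs zs).choose,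
     (exists_good_pair hinf hA n xs zs).choose_spec.choose⟩
  termination_by n => n
  decreasing_by all_goals exact h

private lemma pick_spec (A : H →L[ℂ] H) (hinf : ¬ FiniteDimensional ℂ H)
    (hA : ∀ c : ℂ, ¬ IsFiniteRank (A - c • 1)) (n : ℕ) :
    ‖(pick A hinf hA n).1‖ = 1 ∧
    ⟪(pick A hinf hA n).1, (pick A hinf hA n).2⟫ = 1 ∧
    ⟪(pick A hinf hA n).1, A (pick A hinf hA n).2⟫ = 0 ∧
    (∀ m, m < n → ⟪(pick A hinf hA m).1, (pick A hinf hA n).2⟫ = 0 ∧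
      ⟪(pick A hinf hA m).1, A (pick A hinf hA n).2⟫ = 0) ∧
    (∀ j, j < n → ⟪(pick A hinf hA n).1, (pick A hinf hA j).2⟫ = 0 ∧
      ⟪(pick A hinf hA n).1, A (pick A hinf hA j).2⟫ = 0) := by
  rw [pick]
  set xs : ℕ → H := fun k => if h : k < n then (pick A hinf hA k).1 else 0 with hxs
  set zs : ℕ → H := fun k => if h : k < n then (pick A hinf hA k).2 else 0 with hzs
  obtain ⟨h1, h2, h3, h4, h5⟩ :=
    (exists_good_pair (A := A) hinf hA n xs zs).choose_spec.choose_spec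
  refine ⟨h1, h2, h3, fun m hm => ?_, fun j hj => ?_⟩
  · simpa only [hxs, dif_pos hm] using h4 m hm
  · simpa only [hzs, dif_pos hj] using h5 j hj


private lemma exists_y {A : H →L[ℂ] H}
    (hr : ¬ FiniteDimensional ℂ (LinearMap.range (A : H →ₗ[ℂ] H))) :
    ∃ y : ℕ → H, (∀ n, ‖y n‖ ≤ 1) ∧ LinearIndependent ℂ (fun n => A (y n)) := by
  classical
  set W := LinearMap.range (A : H →ₗ[ℂ] H) with hW
  have hinfW : Infinite (Module.Basis.ofVectorSpaceIndex ℂ W) := by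
    by_contra hfin
    rw [not_infinite_iff_finite] at hfin
    exact hr (Module.Finite.of_basis (Module.Basis.ofVectorSpace ℂ W))
  set e := Infinite.natEmbedding (Module.Basis.ofVectorSpaceIndex ℂ W) with he
  set v : ℕ → W := fun n => Module.Basis.ofVectorSpace ℂ W (e n) with hv
  have hvind : LinearIndependent ℂ v :=
    (Module.Basis.ofVectorSpace ℂ W).linearIndependent.comp e e.injective
  have hvind' : LinearIndependent ℂ (fun n => (v n : H)) :=
    hvind.map' W.subtype (Submodule.ker_subtype W)
  have hu : ∀ n, ∃ u : H, A u = (v n : H) := fun n => (v n).2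
  choose u hu using hu
  set c : ℕ → ℝ := fun n => max 1 ‖u n‖ with hc
  have hc1 : ∀ n, (1:ℝ) ≤ c n := fun n => le_max_left _ _
  have hc0 : ∀ n, ((c n : ℂ)) ≠ 0 := fun n => by
    simpa using ne_of_gt (lt_of_lt_of_le zero_lt_one (hc1 n))
  refine ⟨fun n => ((c n : ℂ))⁻¹ • u n, fun n => ?_, ?_⟩
  · rw [norm_smul, norm_inv]
    have hcn : ‖((c n : ℝ) : ℂ)‖ = c n := by
      rw [Complex.norm_real, Real.norm_eq_abs, abs_of_pos (lt_of_lt_of_le zero_lt_one (hc1 n))]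
    rw [hcn]
    have : ‖u n‖ ≤ c n := le_max_right _ _
    calc (c n)⁻¹ * ‖u n‖ ≤ (c n)⁻¹ * c n := by
          apply mul_le_mul_of_nonneg_left this
          positivity
      _ = 1 := inv_mul_cancel₀ (by positivity)
  · have : (fun n => A (((c n : ℂ))⁻¹ • u n)) =
        (fun n => (Units.mk0 ((c n : ℂ))⁻¹ (inv_ne_zero (hc0 n)) : ℂˣ) • (v n : H)) := by
      funext n
      simp [map_smul, hu n, Units.smul_def]
    rw [this]
    exact hvind'.units_smul _

private lemma isCompactOperator_rankOne (x y : H) :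
    IsCompactOperator (fun w : H => (⟪x, w⟫ : ℂ) • y) := by
  refine ⟨(fun c : ℂ => c • y) '' Metric.closedBall 0 1,
    (isCompact_closedBall 0 1).image (continuous_id.smul continuous_const), ?_⟩
  have hcont : Continuous (fun w : H => (⟪x, w⟫ : ℂ)) := continuous_const.inner continuous_id
  have h0 : (fun w : H => (⟪x, w⟫ : ℂ)) 0 = 0 := by simp
  have hmem : (fun w : H => (⟪x, w⟫ : ℂ)) ⁻¹' Metric.closedBall 0 1 ∈ nhds (0 : H) := by
    apply hcont.continuousAt.preimage_mem_nhds
    have : (⟪x, (0:H)⟫ : ℂ) = 0 := by simp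
    rw [this]
    exact Metric.closedBall_mem_nhds 0 one_pos
  exact Filter.mem_of_superset hmem (fun w hw => ⟨⟪x, w⟫, hw, rfl⟩)

end Aux

/-- If `S ∈ B(H)` has finite-rank commutator with every compact operator on a separable
infinite-dimensional complex Hilbert space, then `S ∈ ℂ·I + F(H)`: there exist `c : ℂ` and a
finite-rank operator `K` with `S = c • 1 + K`. -/
theorem scalar_plus_finite_rank_of_finite_rank_commutators
    (H : Type*) [NormedAddCommGroup H] [InnerProductSpace ℂ H] [CompleteSpace H]
    [TopologicalSpace.SeparableSpace H] (hinf : ¬ FiniteDimensional ℂ H)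
    (S : H →L[ℂ] H)
    (hS : ∀ T : H →L[ℂ] H, IsCompactOperator ⇑T → IsFiniteRank (S * T - T * S)) :
    ∃ (c : ℂ) (K : H →L[ℂ] H), IsFiniteRank K ∧ S = c • (1 : H →L[ℂ] H) + K := by
  classical
  by_contra hgoal
  push_neg at hgoal
  have hA : ∀ c : ℂ, ¬ IsFiniteRank (S - c • 1) := by
    intro c hFR
    exact hgoal c (S - c • 1) hFR (by module)
  have hrange : ¬ FiniteDimensional ℂ (LinearMap.range (S : H →ₗ[ℂ] H)) := by
    intro hFD
    apply hA 0
    have h0 : S - (0 : ℂ) • (1 : H →L[ℂ] H) = S := by simp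
    rw [IsFiniteRank, h0]
    exact hFD
  obtain ⟨y, hy1, hyind⟩ := exists_y (A := S) hrange
  set x : ℕ → H := fun n => (pick S hinf hA n).1 with hxdef
  set z : ℕ → H := fun n => (pick S hinf hA n).2 with hzdef
  have hxnorm : ∀ n, ‖x n‖ = 1 := fun n => (pick_spec S hinf hA n).1
  have hxz : ∀ j k, ⟪x j, z k⟫ = if j = k then 1 else 0 := by
    intro j k
    rcases lt_trichotomy j k with h | h | h
    · rw [if_neg (Nat.ne_of_lt h)]
      exact ((pick_spec S hinf hA k).2.2.2.1 j h).1
    · subst h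
      rw [if_pos rfl]
      exact (pick_spec S hinf hA j).2.1
    · rw [if_neg (Nat.ne_of_gt h)]
      exact ((pick_spec S hinf hA j).2.2.2.2 k h).1
  have hxSz : ∀ j k, ⟪x j, S (z k)⟫ = 0 := by
    intro j k
    rcases lt_trichotomy j k with h | h | h
    · exact ((pick_spec S hinf hA k).2.2.2.1 j h).2
    · subst h
      exact (pick_spec S hinf hA j).2.2.1
    · exact ((pick_spec S hinf hA j).2.2.2.2 k h).2
  -- the compact operator T
  set q : ℝ := 1/2 with hq
  set T0 : ℕ → (H →L[ℂ] H) :=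
    fun j => (((q ^ j : ℝ) : ℂ)) • ((innerSL ℂ (x j)).smulRight (y j)) with hT0
  have hT0norm : ∀ j, ‖T0 j‖ ≤ q ^ j := by
    intro j
    rw [hT0]
    simp only [norm_smul]
    rw [ContinuousLinearMap.norm_smulRight_apply, innerSL_apply_norm, hxnorm j, one_mul]
    have h1 : ‖((q ^ j : ℝ) : ℂ)‖ = q ^ j := by
      rw [Complex.norm_real, Real.norm_eq_abs, abs_of_pos (by positivity)]
    rw [h1]
    calc q ^ j * ‖y j‖ ≤ q ^ j * 1 := by
          apply mul_le_mul_of_nonneg_left (hy1 j) (by positivity)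
      _ = q ^ j := mul_one _
  have hgeom : Summable fun j : ℕ => q ^ j :=
    summable_geometric_of_lt_one (by norm_num [hq]) (by norm_num [hq])
  have hsummable : Summable T0 := Summable.of_norm_bounded hgeom hT0norm
  set T : H →L[ℂ] H := ∑' j, T0 j with hT
  have hhs : HasSum T0 T := hsummable.hasSum
  -- compactness of T
  have hT0c : ∀ j, IsCompactOperator ⇑(T0 j) := by
    intro j
    have hc := (isCompactOperator_rankOne (H := H) (x j) (y j)).smul (((q ^ j : ℝ) : ℂ))
    have : ⇑(T0 j) = (((q ^ j : ℝ) : ℂ)) • (fun w : H => (⟪x j, w⟫ : ℂ) • y j) := by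
      funext w
      simp [hT0]
    rwa [this]
  have hFS : ∀ s : Finset ℕ, IsCompactOperator ⇑(∑ j ∈ s, T0 j) := by
    intro s
    induction s using Finset.induction_on with
    | empty => simpa using isCompactOperator_zero
    | insert a s' ha ih =>
      rw [Finset.sum_insert ha]
      have : ⇑(T0 a + ∑ j ∈ s', T0 j) = ⇑(T0 a) + ⇑(∑ j ∈ s', T0 j) := rfl
      rw [this]
      exact (hT0c a).add ih
  have hTc : IsCompactOperator ⇑T :=
    isCompactOperator_of_tendsto hhs (Filter.Eventually.of_forall hFS)
  -- evaluation of T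
  have happ : ∀ w : H, HasSum (fun j => T0 j w) (T w) := by
    intro w
    have h := (ContinuousLinearMap.apply ℂ H w).hasSum hhs
    simpa using h
  have hT0z : ∀ j k, T0 j (z k) = if j = k then (((q ^ k : ℝ) : ℂ)) • y k else 0 := by
    intro j k
    rw [hT0]
    simp only [ContinuousLinearMap.smul_apply, ContinuousLinearMap.smulRight_apply,
      innerSL_apply_apply]
    rw [hxz j k]
    by_cases h : j = k
    · subst h; rw [if_pos rfl, if_pos rfl, one_smul]
    · rw [if_neg h, if_neg h, zero_smul, smul_zero]
  have hTz : ∀ k, T (z k) = (((q ^ k : ℝ) : ℂ)) • y k := by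
    intro k
    have hsingle : HasSum (fun j => T0 j (z k)) (T0 k (z k)) := by
      apply hasSum_single k
      intro j hj
      rw [hT0z j k, if_neg hj]
    have := (happ (z k)).unique hsingle
    rw [this, hT0z k k, if_pos rfl]
  have hTSz : ∀ k, T (S (z k)) = 0 := by
    intro k
    have hzero : (fun j => T0 j (S (z k))) = fun _ => (0 : H) := by
      funext j
      rw [hT0]
      simp only [ContinuousLinearMap.smul_apply, ContinuousLinearMap.smulRight_apply,
        innerSL_apply_apply]
      rw [hxSz j k, zero_smul, smul_zero]
    have h0 : HasSum (fun j => T0 j (S (z k))) 0 := by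
      rw [hzero]; exact hasSum_zero
    exact (happ (S (z k))).unique h0
  -- the commutator has infinite rank
  set D : H →L[ℂ] H := S * T - T * S with hD
  have hFR : IsFiniteRank D := hS T hTc
  have hDz : ∀ k, D (z k) = (((q ^ k : ℝ) : ℂ)) • S (y k) := by
    intro k
    rw [hD]
    simp only [ContinuousLinearMap.sub_apply, ContinuousLinearMap.mul_apply]
    rw [hTz k, hTSz k]
    simp

  have hqk : ∀ k : ℕ, (((q ^ k : ℝ) : ℂ)) ≠ 0 := by
    intro k
    simp only [ne_eq, Complex.ofReal_eq_zero]
    positivity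
  have hind : LinearIndependent ℂ (fun k => D (z k)) := by
    have : (fun k => D (z k)) =
        (fun k => (Units.mk0 (((q ^ k : ℝ) : ℂ)) (hqk k) : ℂˣ) • S (y k)) := by
      funext k
      rw [hDz k, Units.smul_def, Units.val_mk0]
    rw [this]
    exact hyind.units_smul _
  have hmem : ∀ k, D (z k) ∈ LinearMap.range (D : H →ₗ[ℂ] H) :=
    fun k => LinearMap.mem_range_self _ _
  have hind' : LinearIndependent ℂ
      (fun k => (⟨D (z k), hmem k⟩ : LinearMap.range (D : H →ₗ[ℂ] H))) := by
    apply LinearIndependent.of_comp (Submodule.subtype _)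
    exact hind
  haveI : FiniteDimensional ℂ (LinearMap.range (D : H →ₗ[ℂ] H)) := hFR
  exact Module.Finite.not_linearIndependent_of_infinite _ hind'
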